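/- Let I be a Borel fixed ideal of k[x₁,…,xₙ], set h := max{max(m) : m ∈ G(I)}, and assume x_h^{l_I} ∈ G(I) for some l_I > 0 (the Cohen–Macaulay condition). Then for every m ∈ G(I) and every k ∈ supp(m) with k < h, there exists an integer l ≥ 0 such that (m/x_k)·x_{k+1}·x_h^l ∈ G(I). -/
import Mathlib


namespace Paper

/-- A monomial of `k[x₁,…,xₙ]`, identified with its exponent vector. -/
abbrev Mon : Type := ℕ → ℕ

/-- The variable `x_k` as a monomial. -/
def e (k : ℕ) : Mon := fun i => if i = k then 1 else 0

/-- The power `x_k^l` as a monomial. -/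
def xpw (k l : ℕ) : Mon := fun i => if i = k then l else 0

/-- The support of a monomial. -/
def msupp (m : Mon) : Set ℕ := {i | m i ≠ 0}

/-- `max(m)`, the largest index of a variable dividing `m`. -/
noncomputable def mmax (m : Mon) : ℕ := sSup (msupp m)

/-- `min(m)`, the smallest index of a variable dividing `m`. -/
noncomputable def mmin (m : Mon) : ℕ := sInf (msupp m)

/-- A monomial uses only variables `x₁,…,xₙ`. -/
def inVars (n : ℕ) (m : Mon) : Prop := ∀ i, m i ≠ 0 → 1 ≤ i ∧ i ≤ n

/-- A monomial ideal of `k[x₁,…,xₙ]`, identified with its set of monomials, which is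
closed under multiplication by arbitrary monomials. -/
structure MonIdeal (n : ℕ) where
  carrier : Set Mon
  vars_mem : ∀ m ∈ carrier, inVars n m
  mul_mem : ∀ m ∈ carrier, ∀ a : Mon, inVars n a → m + a ∈ carrier

/-- `G(I)`: the set of monomials of `I` minimal under divisibility. -/
def minGens {n : ℕ} (I : MonIdeal n) : Set Mon :=
  {m | m ∈ I.carrier ∧ ∀ m' ∈ I.carrier, m' ≤ m → m' = m}

/-- `I` is stable: for every monomial `m ∈ I` and `1 ≤ i < max(m)`,
`x_i·(m/x_{max(m)}) ∈ I`. -/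
def Stable {n : ℕ} (I : MonIdeal n) : Prop :=
  ∀ m ∈ I.carrier, ∀ i : ℕ, 1 ≤ i → i < mmax m → (m - e (mmax m)) + e i ∈ I.carrier

/-- `I` is Borel fixed: for every monomial `m ∈ I` and `1 ≤ i < j` with `x_j ∣ m`,
`x_i·(m/x_j) ∈ I`. -/
def Borel {n : ℕ} (I : MonIdeal n) : Prop :=
  ∀ m ∈ I.carrier, ∀ i j : ℕ, 1 ≤ i → i < j → m j ≠ 0 → (m - e j) + e i ∈ I.carrier

/-- The lexicographic order `m ≺ m'` on monomials with `x₁ ≻ x₂ ≻ ⋯`. -/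
def mlt (m m' : Mon) : Prop := ∃ i : ℕ, (∀ j, j < i → m j = m' j) ∧ m i < m' i

/-- `g` is the Eliahou–Kervaire decomposition function of `I`: for every monomial `m ∈ I`,
`g m ∈ G(I)`, `g m` divides `m`, and `max(g m) ≤ min(m / g m)`. -/
def IsDecompFn {n : ℕ} (I : MonIdeal n) (g : Mon → Mon) : Prop :=
  ∀ m ∈ I.carrier, g m ∈ minGens I ∧ g m ≤ m ∧ mmax (g m) ≤ mmin (m - g m)

/-- `max { max(m) : m ∈ G(I) }`. -/
noncomputable def hMax {n : ℕ} (I : MonIdeal n) : ℕ :=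
  sSup {j | ∃ m ∈ minGens I, mmax m = j}

/-- Upward closure: if `u ∈ I`, `u ≤ v`, and `v` is in the variables, then `v ∈ I`. -/
lemma mem_of_le {n : ℕ} (I : MonIdeal n) {u v : Mon} (hu : u ∈ I.carrier)
    (huv : u ≤ v) (hv : inVars n v) : v ∈ I.carrier := by
  have h1 : u + (v - u) = v := by
    funext i
    have h0 : u i ≤ v i := huv i
    simp only [Pi.add_apply, Pi.sub_apply]
    omega
  have h2 : inVars n (v - u) := by
    intro i hi
    apply hv i
    simp only [Pi.sub_apply] at hi
    omega
  have := I.mul_mem u hu (v - u) h2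
  rwa [h1] at this

lemma mmax_le {m : Mon} {b : ℕ} (hb : ∀ i, m i ≠ 0 → i ≤ b) : mmax m ≤ b := by
  unfold mmax
  rcases Set.eq_empty_or_nonempty (msupp m) with hE | hN
  · simp [hE]
  · exact csSup_le hN (fun i hi => hb i hi)

lemma le_mmax {m : Mon} {i b : ℕ} (hi : m i ≠ 0) (hb : ∀ j, m j ≠ 0 → j ≤ b) :
    i ≤ mmax m :=
  le_csSup ⟨b, fun j hj => hb j hj⟩ hi

set_option maxHeartbeats 2000000 in
/-- Let `I` be a Borel fixed ideal, `h = max{max(m) : m ∈ G(I)}`, and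
suppose `x_h^{l_I} ∈ G(I)` for some `l_I > 0` (the Cohen–Macaulay condition). Then for every
`m ∈ G(I)` and every `k ∈ supp(m)` with `k < h` there is `l ≥ 0` with
`(m/x_k)·x_{k+1}·x_h^l ∈ G(I)`. -/
theorem statement14 {n : ℕ} (I : MonIdeal n) (hI : Borel I)
    (h : ℕ) (hh : hMax I = h)
    (lI : ℕ) (hlI : 0 < lI) (hCM : xpw h lI ∈ minGens I) :
    ∀ m ∈ minGens I, ∀ k, m k ≠ 0 → k < h →
      ∃ l : ℕ, ((m - e k) + e (k + 1)) + xpw h l ∈ minGens I := by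
  intro m hm k hk hkh
  have hmI := hm.1
  have hvm := I.vars_mem m hmI
  have hk1 : 1 ≤ k := (hvm k hk).1
  have hxI := hCM.1
  have hh1 : 1 ≤ h ∧ h ≤ n := I.vars_mem _ hxI h (by simp [xpw]; omega)
  -- every variable of a minimal generator has index ≤ h
  have hbound : ∀ m' ∈ minGens I, ∀ i, m' i ≠ 0 → i ≤ h := by
    intro m' hm' i hi
    have hvm' := I.vars_mem m' hm'.1
    have h1 : i ≤ mmax m' := le_mmax hi (fun j hj => (hvm' j hj).2)
    have h2 : mmax m' ≤ hMax I := by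
      apply le_csSup
      · refine ⟨n, ?_⟩
        rintro j ⟨m'', hm'', rfl⟩
        exact mmax_le (fun i hi => (I.vars_mem m'' hm''.1 i hi).2)
      · exact ⟨m', hm', rfl⟩
    omega
  have hsupp : ∀ i, m i ≠ 0 → i ≤ h := hbound m hm
  -- pointwise formula for the candidate monomials
  set w : ℕ → Mon := fun l => ((m - e k) + e (k + 1)) + xpw h l with hwdef
  have hw : ∀ l i, w l i
      = m i - (if i = k then 1 else 0) + (if i = k + 1 then 1 else 0)
        + (if i = h then l else 0) := by
    intro l i
    simp [hwdef, e, xpw, Pi.sub_apply]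
  have hwv : ∀ l, inVars n (w l) := by
    intro l i hi
    rw [hw] at hi
    by_cases h1 : i = k + 1
    · subst h1; exact ⟨by omega, by omega⟩
    · by_cases h2 : i = h
      · subst h2; exact ⟨hh1.1, hh1.2⟩
      · simp [h1, h2] at hi
        exact hvm i (by omega)
  -- the set of exponents l with w l ∈ I
  set S : Set ℕ := {l | w l ∈ I.carrier} with hSdef
  have hSne : lI ∈ S := by
    apply mem_of_le I hxI _ (hwv lI)
    intro i
    rw [hw]
    simp only [xpw]
    split_ifs <;> omega
  set l₀ := sInf S with hl₀def
  have hl₀mem : w l₀ ∈ I.carrier := Nat.sInf_mem ⟨lI, hSne⟩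
  have hl₀min : ∀ l, l < l₀ → w l ∉ I.carrier := by
    intro l hl hmem
    have := Nat.sInf_le (show l ∈ S from hmem)
    omega
  refine ⟨l₀, hl₀mem, ?_⟩
  -- minimality of w l₀
  intro u hu hule
  by_contra hne
  have hj : ∃ j, u j < w l₀ j := by
    by_contra hcon
    push_neg at hcon
    exact hne (funext fun i => le_antisymm (hule i) (hcon i))
  obtain ⟨j, hj⟩ := hj
  have hjlt : u j < m j - (if j = k then 1 else 0) + (if j = k + 1 then 1 else 0)
      + (if j = h then l₀ else 0) := by rw [← hw]; exact hj
  -- j ≤ h and 1 ≤ j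
  have hjh : j ≤ h := by
    by_cases h1 : j = k + 1
    · omega
    · by_cases h2 : j = h
      · omega
      · refine hsupp j ?_
        have h2' := hjlt
        split_ifs at h2' <;> omega
  have hj1 : 1 ≤ j := by
    by_cases h1 : j = k + 1
    · omega
    · by_cases h2 : j = h
      · omega
      · have h3 : m j ≠ 0 := by
          have h2' := hjlt
          split_ifs at h2' <;> omega
        exact (hvm j h3).1
  -- w l₀ - e j ∈ I
  have huv : inVars n (w l₀ - e j) := by
    intro i hi
    apply hwv l₀ i
    simp only [Pi.sub_apply] at hi
    omega
  have hu' : w l₀ - e j ∈ I.carrier := by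
    apply mem_of_le I hu _ huv
    intro i
    simp only [Pi.sub_apply, e]
    by_cases h1 : i = j
    · subst h1; simpa using by omega
    · simp [h1]; exact hule i
  have hu'i : ∀ i, (w l₀ - e j) i
      = m i - (if i = k then 1 else 0) + (if i = k + 1 then 1 else 0)
        + (if i = h then l₀ else 0) - (if i = j then 1 else 0) := by
    intro i
    simp only [Pi.sub_apply, e, hw]
  have hval : ∀ (a b c i : ℕ), (((w l₀ - e a) - e b) + e c) i
      = w l₀ i - (if i = a then 1 else 0) - (if i = b then 1 else 0)
        + (if i = c then 1 else 0) := by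
    intro a b c i
    simp only [Pi.sub_apply, Pi.add_apply, e]
  -- a contradiction from a proper divisor of m lying in I
  have hmcon : ∀ v : Mon, v ∈ I.carrier → v ≤ m → v ≠ m → False := by
    intro v hv hvle hvne
    exact hvne (hm.2 v hv hvle)
  rcases lt_or_eq_of_le hjh with hjh' | hjh'
  · -- case j < h
    by_cases hl0 : l₀ = 0
    · -- l₀ = 0
      by_cases hjk1 : j = k + 1
      · -- w 0 - e (k+1) = m - e k
        have heq : w l₀ - e j = m - e k := by
          funext i
          rw [hu'i]
          simp only [Pi.sub_apply, e]
          have h2 := hjlt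
          split_ifs at h2 ⊢ <;> omega
        rw [heq] at hu'
        refine hmcon _ hu' (fun i => by simp only [Pi.sub_apply, e]; split_ifs <;> omega) ?_
        intro hcon
        have := congrFun hcon k
        simp [e, Pi.sub_apply] at this
        omega
      · -- Borel move k ← k+1 gives m - e j ∈ I
        have hne1 : (w l₀ - e j) (k + 1) ≠ 0 := by
          rw [hu'i]
          split_ifs <;> omega
        have hB := hI _ hu' k (k + 1) hk1 (by omega) hne1
        have heq : ((w l₀ - e j) - e (k + 1)) + e k = m - e j := by
          funext i
          rw [hval, hw]
          simp only [Pi.sub_apply, e]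
          have h2 := hjlt
          rcases eq_or_ne i j with rfl | hij
          · split_ifs at h2 ⊢ <;> omega
          · rcases eq_or_ne i k with rfl | hik
            · split_ifs at h2 ⊢ <;> omega
            · split_ifs at h2 ⊢ <;> omega
        rw [heq] at hB
        refine hmcon _ hB (fun i => by simp only [Pi.sub_apply, e]; split_ifs <;> omega) ?_
        intro hcon
        have h3 := congrFun hcon j
        simp [Pi.sub_apply, e] at h3
        have h2 := hjlt
        split_ifs at h2 h3 <;> omega
    · -- l₀ > 0 : Borel move j ← h brings back w (l₀ - 1) ∈ I
      have hneh : (w l₀ - e j) h ≠ 0 := by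
        rw [hu'i]
        split_ifs <;> omega
      have hB := hI _ hu' j h hj1 hjh' hneh
      have heq : ((w l₀ - e j) - e h) + e j = w (l₀ - 1) := by
        funext i
        rw [hval, hw l₀, hw (l₀ - 1)]
        have h2 := hjlt
        rcases eq_or_ne i j with rfl | hij
        · split_ifs at h2 ⊢ <;> omega
        · rcases eq_or_ne i k with rfl | hik
          · split_ifs at h2 ⊢ <;> omega
          · split_ifs at h2 ⊢ <;> omega
      rw [heq] at hB
      exact hl₀min (l₀ - 1) (by omega) hB
  · -- case j = h
    rw [hjh'] at hjlt hu' hu'i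
    by_cases hl0 : l₀ = 0
    · -- l₀ = 0
      by_cases hkh' : k + 1 = h
      · -- w 0 - e h = m - e k
        have heq : w l₀ - e h = m - e k := by
          funext i
          rw [hu'i]
          simp only [Pi.sub_apply, e]
          have h2 := hjlt
          split_ifs at h2 ⊢ <;> omega
        rw [heq] at hu'
        refine hmcon _ hu' (fun i => by simp only [Pi.sub_apply, e]; split_ifs <;> omega) ?_
        intro hcon
        have := congrFun hcon k
        simp [e, Pi.sub_apply] at this
        omega
      · -- m h ≥ 1, Borel move k ← k+1 gives m - e h ∈ I
        have hmh : 1 ≤ m h := by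
          have h2 := hjlt
          split_ifs at h2 <;> omega
        have hne1 : (w l₀ - e h) (k + 1) ≠ 0 := by
          rw [hu'i]
          split_ifs <;> omega
        have hB := hI _ hu' k (k + 1) hk1 (by omega) hne1
        have heq : ((w l₀ - e h) - e (k + 1)) + e k = m - e h := by
          funext i
          rw [hval, hw]
          simp only [Pi.sub_apply, e]
          rcases eq_or_ne i k with rfl | hik
          · split_ifs <;> omega
          · split_ifs <;> omega
        rw [heq] at hB
        refine hmcon _ hB (fun i => by simp only [Pi.sub_apply, e]; split_ifs <;> omega) ?_
        intro hcon
        have h3 := congrFun hcon h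
        simp [Pi.sub_apply, e] at h3
        omega
    · -- l₀ > 0 : w l₀ - e h = w (l₀ - 1) ∈ I, contradiction with minimality
      have heq : w l₀ - e h = w (l₀ - 1) := by
        funext i
        simp only [Pi.sub_apply, e]
        rw [hw l₀, hw (l₀ - 1)]
        rcases eq_or_ne i k with rfl | hik
        · split_ifs <;> omega
        · split_ifs <;> omega
      rw [heq] at hu'
      exact hl₀min (l₀ - 1) (by omega) hu'

end Paper
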